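/- Let Δ be a flag Eulerian simplicial complex of dimension 4 with n vertices. Then f_1(Δ) < n²/4 + 3n; equivalently, 4·f_1(Δ) < n² + 12n. -/

import Mathlib

/-- A finite abstract simplicial complex on vertex set `Fin n`: a collection of subsets of
`Fin n` (the faces) closed under taking subsets and containing every singleton. -/
structure AbsComplex (n : ℕ) where
  faces : Finset (Finset (Fin n))
  down_closed : ∀ F ∈ faces, ∀ G ⊆ F, G ∈ faces
  singleton_mem : ∀ v : Fin n, ({v} : Finset (Fin n)) ∈ faces

namespace AbsComplex

variable {n : ℕ}

/-- `fNum Δ i` is the number of faces of `Δ` of cardinality `i + 1`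
(i.e. of dimension `i`). -/
def fNum (Δ : AbsComplex n) (i : ℕ) : ℕ :=
  (Δ.faces.filter fun F => F.card = i + 1).card

/-- A missing face of `Δ`: a set which is not a face but all of whose proper subsets
are faces. -/
def IsMissing (Δ : AbsComplex n) (F : Finset (Fin n)) : Prop :=
  F ∉ Δ.faces ∧ ∀ G ⊂ F, G ∈ Δ.faces

/-- `mNum Δ i` is the number of missing faces of `Δ` of cardinality `i + 1`
(i.e. of dimension `i`). -/
noncomputable def mNum (Δ : AbsComplex n) (i : ℕ) : ℕ :=
  {F : Finset (Fin n) | Δ.IsMissing F ∧ F.card = i + 1}.ncard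

/-- The faces of the link of the face `F` in `Δ`: all faces `G` with `G ∩ F = ∅`
and `G ∪ F` a face. -/
def linkFaces (Δ : AbsComplex n) (F : Finset (Fin n)) : Finset (Finset (Fin n)) :=
  Δ.faces.filter fun G => G ∩ F = ∅ ∧ G ∪ F ∈ Δ.faces

/-- The reduced Euler characteristic `χ̃ = −1 + f₀ − f₁ + f₂ − ⋯` of a (downward closed,
nonempty) collection of faces, computed as `∑_F (−1)^{|F|−1}` over all faces `F`
(including the empty face). -/
def reducedEuler (s : Finset (Finset (Fin n))) : ℤ :=
  ∑ F ∈ s, (-1 : ℤ) ^ (F.card + 1)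

/-- `Δ.IsEulerianDim D` says that `Δ` is an Eulerian complex of dimension `D`: every face has
cardinality at most `D + 1`, some face has cardinality `D + 1`, and for every face `F`
(including the empty face) the reduced Euler characteristic of the link of `F` equals
`(−1)^{D − |F|}` (written as `(−1)^{D + |F|}`, which has the same parity). -/
def IsEulerianDim (Δ : AbsComplex n) (D : ℕ) : Prop :=
  (∀ F ∈ Δ.faces, F.card ≤ D + 1) ∧ (∃ F ∈ Δ.faces, F.card = D + 1) ∧
    ∀ F ∈ Δ.faces, reducedEuler (Δ.linkFaces F) = (-1 : ℤ) ^ (D + F.card)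

/-- `Δ` is `j`-neighborly: every `j`-element subset of the vertex set is a face. -/
def Neighborly (Δ : AbsComplex n) (j : ℕ) : Prop :=
  ∀ S : Finset (Fin n), S.card = j → S ∈ Δ.faces

/-- `Δ` is flag: every missing face has cardinality `2`. -/
def Flag (Δ : AbsComplex n) : Prop :=
  ∀ F : Finset (Fin n), Δ.IsMissing F → F.card = 2

/-- number of faces of cardinality `k` -/
def cnt (Δ : AbsComplex n) (k : ℕ) : ℕ := (Δ.faces.filter fun H => H.card = k).card

lemma link_eq (Δ : AbsComplex n) {F : Finset (Fin n)} (hF : F ∈ Δ.faces) :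
    reducedEuler (Δ.linkFaces F)
      = ∑ H ∈ Δ.faces.filter (fun H => F ⊆ H), (-1:ℤ)^(H.card + F.card + 1) := by
  unfold reducedEuler linkFaces
  refine Finset.sum_nbij' (fun G => G ∪ F) (fun H => H \ F) ?_ ?_ ?_ ?_ ?_
  · intro G hG
    simp only [Finset.mem_filter] at hG ⊢
    exact ⟨hG.2.2, Finset.subset_union_right⟩
  · intro H hH
    simp only [Finset.mem_filter] at hH ⊢
    refine ⟨Δ.down_closed H hH.1 _ (Finset.sdiff_subset), Finset.sdiff_inter_self _ _, ?_⟩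
    rw [Finset.sdiff_union_of_subset hH.2]
    exact hH.1
  · intro G hG
    simp only [Finset.mem_filter] at hG
    exact Finset.union_sdiff_cancel_right (Finset.disjoint_iff_inter_eq_empty.mpr hG.2.1)
  · intro H hH
    simp only [Finset.mem_filter] at hH
    exact Finset.sdiff_union_of_subset hH.2
  · intro G hG
    simp only [Finset.mem_filter] at hG
    have hd : Disjoint G F := Finset.disjoint_iff_inter_eq_empty.mpr hG.2.1
    rw [Finset.card_union_of_disjoint hd]
    have h1 : G.card + F.card + F.card + 1 = (G.card + 1) + 2 * F.card := by ring
    have h2 : ((-1:ℤ))^((G.card+1)+2*F.card) = (-1)^(G.card+1) := by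
      rw [pow_add, pow_mul, neg_one_sq, one_pow, mul_one]
    rw [h1, h2]

lemma sum_by_card (s : Finset (Finset (Fin n))) (h : ∀ F ∈ s, F.card ≤ 5) (g : ℕ → ℤ) :
    ∑ H ∈ s, g H.card
      = ∑ k ∈ Finset.range 6, ((s.filter fun H => H.card = k).card : ℤ) * g k := by
  rw [← Finset.sum_fiberwise_of_maps_to
    (fun H hH => Finset.mem_range.mpr (Nat.lt_succ_of_le (h H hH))) (fun H => g H.card)]
  refine Finset.sum_congr rfl fun k _ => ?_
  have hterm : ∀ H ∈ s.filter (fun H => H.card = k), g H.card = g k := fun H hH => by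
    rw [(Finset.mem_filter.mp hH).2]
  rw [Finset.sum_congr rfl hterm, Finset.sum_const, nsmul_eq_mul]

lemma card_subfaces (Δ : AbsComplex n) {H : Finset (Fin n)} (hH : H ∈ Δ.faces) (c : ℕ) :
    (Δ.faces.filter fun F => F.card = c ∧ F ⊆ H).card = H.card.choose c := by
  rw [← Finset.card_powersetCard]
  congr 1
  ext F
  simp only [Finset.mem_filter, Finset.mem_powersetCard]
  constructor
  · rintro ⟨_, hc, hsub⟩; exact ⟨hsub, hc⟩
  · rintro ⟨hsub, hc⟩; exact ⟨Δ.down_closed H hH F hsub, hc, hsub⟩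

lemma count_pairs (Δ : AbsComplex n) (c k : ℕ) :
    ∑ F ∈ Δ.faces.filter (fun F => F.card = c),
        ((Δ.faces.filter (fun H => F ⊆ H)).filter (fun H => H.card = k)).card
      = Δ.cnt k * k.choose c := by
  have h1 : ∀ F ∈ Δ.faces.filter (fun F => F.card = c),
      ((Δ.faces.filter (fun H => F ⊆ H)).filter (fun H => H.card = k)).card
        = (Finset.bipartiteAbove (fun (F H : Finset (Fin n)) => F ⊆ H)
            (Δ.faces.filter fun H => H.card = k) F).card := by
    intro F _
    unfold Finset.bipartiteAbove
    rw [Finset.filter_comm]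
  rw [Finset.sum_congr rfl h1,
    Finset.sum_card_bipartiteAbove_eq_sum_card_bipartiteBelow]
  have h2 : ∀ H ∈ Δ.faces.filter (fun H => H.card = k),
      (Finset.bipartiteBelow (fun (F H : Finset (Fin n)) => F ⊆ H)
          (Δ.faces.filter fun F => F.card = c) H).card = k.choose c := by
    intro H hH
    obtain ⟨hHS, hHk⟩ := Finset.mem_filter.mp hH
    unfold Finset.bipartiteBelow
    rw [Finset.filter_filter, Δ.card_subfaces hHS c, hHk]
  rw [Finset.sum_congr rfl h2, Finset.sum_const, smul_eq_mul]
  rfl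

lemma euler_level (Δ : AbsComplex n) (hdim : ∀ F ∈ Δ.faces, F.card ≤ 5)
    (hE : ∀ F ∈ Δ.faces, reducedEuler (Δ.linkFaces F) = (-1:ℤ)^(4 + F.card)) (c : ℕ) :
    ∑ k ∈ Finset.range 6, (Δ.cnt k : ℤ) * (k.choose c : ℤ) * (-1:ℤ)^(k+c+1)
      = (Δ.cnt c : ℤ) * (-1:ℤ)^(4+c) := by
  have step1 : ∑ F ∈ Δ.faces.filter (fun F => F.card = c), reducedEuler (Δ.linkFaces F)
      = (Δ.cnt c : ℤ) * (-1:ℤ)^(4+c) := by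
    have h : ∀ F ∈ Δ.faces.filter (fun F => F.card = c),
        reducedEuler (Δ.linkFaces F) = (-1:ℤ)^(4+c) := by
      intro F hF
      obtain ⟨hFS, hFc⟩ := Finset.mem_filter.mp hF
      rw [hE F hFS, hFc]
    rw [Finset.sum_congr rfl h, Finset.sum_const, nsmul_eq_mul]
    rfl
  have h2 : ∀ F ∈ Δ.faces.filter (fun F => F.card = c),
      reducedEuler (Δ.linkFaces F)
        = ∑ k ∈ Finset.range 6,
            ((((Δ.faces.filter (fun H => F ⊆ H)).filter (fun H => H.card = k)).card : ℤ)
              * (-1:ℤ)^(k+c+1)) := by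
    intro F hF
    obtain ⟨hFS, hFc⟩ := Finset.mem_filter.mp hF
    rw [Δ.link_eq hFS, hFc]
    exact sum_by_card (Δ.faces.filter (fun H => F ⊆ H))
      (fun H hH => hdim H (Finset.mem_filter.mp hH).1) (fun k => (-1:ℤ)^(k+c+1))
  calc ∑ k ∈ Finset.range 6, (Δ.cnt k : ℤ) * (k.choose c : ℤ) * (-1:ℤ)^(k+c+1)
      = ∑ k ∈ Finset.range 6, ∑ F ∈ Δ.faces.filter (fun F => F.card = c),
          ((((Δ.faces.filter (fun H => F ⊆ H)).filter (fun H => H.card = k)).card : ℤ)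
            * (-1:ℤ)^(k+c+1)) := by
        refine Finset.sum_congr rfl fun k _ => ?_
        rw [← Finset.sum_mul]
        congr 1
        rw [← Nat.cast_sum, Δ.count_pairs c k]
        push_cast
        ring
    _ = ∑ F ∈ Δ.faces.filter (fun F => F.card = c), reducedEuler (Δ.linkFaces F) := by
        rw [Finset.sum_comm]
        exact (Finset.sum_congr rfl h2).symm
    _ = (Δ.cnt c : ℤ) * (-1:ℤ)^(4+c) := step1

lemma cnt_zero (Δ : AbsComplex n) (hne : (∅ : Finset (Fin n)) ∈ Δ.faces) : Δ.cnt 0 = 1 := by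
  unfold cnt
  have h : Δ.faces.filter (fun H => H.card = 0) = {∅} := by
    ext F
    simp only [Finset.mem_filter, Finset.mem_singleton, Finset.card_eq_zero]
    constructor
    · rintro ⟨_, h⟩; exact h
    · rintro rfl; exact ⟨hne, rfl⟩
  rw [h, Finset.card_singleton]

lemma cnt_one (Δ : AbsComplex n) : Δ.cnt 1 = n := by
  unfold cnt
  have h : Δ.faces.filter (fun H => H.card = 1)
      = Finset.univ.image (fun v : Fin n => ({v} : Finset (Fin n))) := by
    ext F
    simp only [Finset.mem_filter, Finset.mem_image, Finset.card_eq_one, Finset.mem_univ, true_and]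
    constructor
    · rintro ⟨_, a, rfl⟩; exact ⟨a, rfl⟩
    · rintro ⟨a, rfl⟩; exact ⟨Δ.singleton_mem a, a, rfl⟩
  rw [h, Finset.card_image_of_injective _ Finset.singleton_injective, Finset.card_univ,
    Fintype.card_fin]

def nbrs (Δ : AbsComplex n) (v : Fin n) : Finset (Fin n) :=
  Finset.univ.filter fun w => w ≠ v ∧ ({v, w} : Finset (Fin n)) ∈ Δ.faces

lemma nbrs_card (Δ : AbsComplex n) (v : Fin n) :
    (Δ.nbrs v).card = (Δ.faces.filter fun e => e.card = 2 ∧ v ∈ e).card := by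
  refine Finset.card_bij (fun w _ => ({v, w} : Finset (Fin n))) ?_ ?_ ?_
  · intro w hw
    simp only [nbrs, Finset.mem_filter, Finset.mem_univ, true_and] at hw
    refine Finset.mem_filter.mpr ⟨hw.2, ?_, Finset.mem_insert_self v _⟩
    rw [Finset.card_insert_of_notMem (by simp [Ne.symm hw.1]), Finset.card_singleton]
  · intro a ha b hb hab
    have hab' : ({v, a} : Finset (Fin n)) = {v, b} := hab
    have haa : a ∈ ({v, b} : Finset (Fin n)) := by
      rw [← hab']; exact Finset.mem_insert_of_mem (Finset.mem_singleton_self a)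
    simp only [nbrs, Finset.mem_filter, Finset.mem_univ, true_and] at ha
    rcases Finset.mem_insert.mp haa with h | h
    · exact absurd h ha.1
    · exact Finset.mem_singleton.mp h
  · intro e he
    obtain ⟨heS, hec, hev⟩ := Finset.mem_filter.mp he
    obtain ⟨x, y, hxy, rfl⟩ := Finset.card_eq_two.mp hec
    rcases Finset.mem_insert.mp hev with rfl | h
    · refine ⟨y, ?_, rfl⟩
      simp only [nbrs, Finset.mem_filter, Finset.mem_univ, true_and]
      exact ⟨Ne.symm hxy, heS⟩
    · have hv : v = y := Finset.mem_singleton.mp h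
      subst hv
      refine ⟨x, ?_, ?_⟩
      · simp only [nbrs, Finset.mem_filter, Finset.mem_univ, true_and]
        exact ⟨hxy, by rwa [Finset.pair_comm]⟩
      · exact Finset.pair_comm v x

lemma nbrs_card' (Δ : AbsComplex n) (v : Fin n) :
    ((Δ.faces.filter fun e => e.card = 2).filter (fun e => v ∈ e)).card = (Δ.nbrs v).card := by
  rw [Finset.filter_filter, nbrs_card]

lemma sum_deg (Δ : AbsComplex n) : ∑ v : Fin n, (Δ.nbrs v).card = 2 * Δ.cnt 2 := by
  calc ∑ v : Fin n, (Δ.nbrs v).card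
      = ∑ v ∈ Finset.univ, (Finset.bipartiteAbove (fun (v : Fin n) (e : Finset (Fin n)) => v ∈ e)
          (Δ.faces.filter fun e => e.card = 2) v).card := by
        refine Finset.sum_congr rfl fun v _ => ?_
        simp only [Finset.bipartiteAbove]
        rw [nbrs_card']
    _ = ∑ e ∈ Δ.faces.filter (fun e => e.card = 2),
          (Finset.bipartiteBelow (fun (v : Fin n) (e : Finset (Fin n)) => v ∈ e)
            Finset.univ e).card :=
        Finset.sum_card_bipartiteAbove_eq_sum_card_bipartiteBelow _
    _ = ∑ _e ∈ Δ.faces.filter (fun e => e.card = 2), 2 := by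
        refine Finset.sum_congr rfl fun e he => ?_
        obtain ⟨-, hec⟩ := Finset.mem_filter.mp he
        simp only [Finset.bipartiteBelow]
        rw [show Finset.univ.filter (fun v => v ∈ e) = e from by ext a; simp]
        exact hec
    _ = 2 * Δ.cnt 2 := by rw [Finset.sum_const, smul_eq_mul, mul_comm]; rfl

lemma sum_edge_deg (Δ : AbsComplex n) :
    ∑ e ∈ Δ.faces.filter (fun e => e.card = 2), ∑ v ∈ e, (Δ.nbrs v).card
      = ∑ v : Fin n, (Δ.nbrs v).card * (Δ.nbrs v).card := by
  calc ∑ e ∈ Δ.faces.filter (fun e => e.card = 2), ∑ v ∈ e, (Δ.nbrs v).card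
      = ∑ e ∈ Δ.faces.filter (fun e => e.card = 2), ∑ v ∈ Finset.univ,
          (if v ∈ e then (Δ.nbrs v).card else 0) := by
        refine Finset.sum_congr rfl fun e _ => ?_
        rw [← Finset.sum_filter]
        congr 1
        ext a; simp
    _ = ∑ v ∈ Finset.univ, ∑ e ∈ Δ.faces.filter (fun e => e.card = 2),
          (if v ∈ e then (Δ.nbrs v).card else 0) := Finset.sum_comm
    _ = ∑ v : Fin n, (Δ.nbrs v).card * (Δ.nbrs v).card := by
        refine Finset.sum_congr rfl fun v _ => ?_
        rw [← Finset.sum_filter, Finset.sum_const, smul_eq_mul, nbrs_card']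

lemma inter_card (Δ : AbsComplex n) (hflag : Δ.Flag)
    {u v : Fin n} (huv : u ≠ v) (he : ({u, v} : Finset (Fin n)) ∈ Δ.faces) :
    (Δ.nbrs u ∩ Δ.nbrs v).card
      = (Δ.faces.filter fun t => t.card = 3 ∧ ({u, v} : Finset (Fin n)) ⊆ t).card := by
  have hcard2 : ({u, v} : Finset (Fin n)).card = 2 := Finset.card_pair huv
  refine Finset.card_bij (fun w _ => insert w ({u, v} : Finset (Fin n))) ?_ ?_ ?_
  · intro w hw
    simp only [nbrs, Finset.mem_inter, Finset.mem_filter, Finset.mem_univ, true_and] at hw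
    obtain ⟨⟨hwu, hfu⟩, hwv, hfv⟩ := hw
    have hwe : w ∉ ({u, v} : Finset (Fin n)) := by simp [hwu, hwv]
    have hc3 : (insert w ({u, v} : Finset (Fin n))).card = 3 := by
      rw [Finset.card_insert_of_notMem hwe, hcard2]
    have hface : insert w ({u, v} : Finset (Fin n)) ∈ Δ.faces := by
      by_contra hnot
      have hmiss : Δ.IsMissing (insert w ({u, v} : Finset (Fin n))) := by
        refine ⟨hnot, fun G hG => ?_⟩
        obtain ⟨x, hxt, hxG⟩ := Finset.exists_of_ssubset hG
        have hGsub := hG.subset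
        have hxm : x = w ∨ x = u ∨ x = v := by
          simpa [Finset.mem_insert] using hxt
        rcases hxm with rfl | rfl | rfl
        · refine Δ.down_closed _ he G fun a ha => ?_
          have h2 := hGsub ha
          simp only [Finset.mem_insert, Finset.mem_singleton] at h2 ⊢
          rcases h2 with rfl | h2
          · exact absurd ha hxG
          · exact h2
        · refine Δ.down_closed _ hfv G fun a ha => ?_
          have h2 := hGsub ha
          simp only [Finset.mem_insert, Finset.mem_singleton] at h2 ⊢
          rcases h2 with rfl | rfl | rfl
          · exact Or.inr rfl
          · exact absurd ha hxG
          · exact Or.inl rfl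
        · refine Δ.down_closed _ hfu G fun a ha => ?_
          have h2 := hGsub ha
          simp only [Finset.mem_insert, Finset.mem_singleton] at h2 ⊢
          rcases h2 with rfl | rfl | rfl
          · exact Or.inr rfl
          · exact Or.inl rfl
          · exact absurd ha hxG
      have h2 := hflag _ hmiss
      exact absurd (hc3.symm.trans h2) (by norm_num)
    exact Finset.mem_filter.mpr ⟨hface, hc3, Finset.subset_insert _ _⟩
  · intro a ha b hb hab
    have hab' : insert a ({u, v} : Finset (Fin n)) = insert b {u, v} := hab
    simp only [nbrs, Finset.mem_inter, Finset.mem_filter, Finset.mem_univ, true_and] at ha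
    have hm : a ∈ insert b ({u, v} : Finset (Fin n)) := by
      rw [← hab']; exact Finset.mem_insert_self a _
    rcases Finset.mem_insert.mp hm with h | h
    · exact h
    · rcases Finset.mem_insert.mp h with h' | h'
      · exact absurd h' ha.1.1
      · exact absurd (Finset.mem_singleton.mp h') ha.2.1
  · intro t ht
    obtain ⟨htS, htc, hsub⟩ := Finset.mem_filter.mp ht
    have hsd : (t \ ({u, v} : Finset (Fin n))).card = 1 := by
      rw [Finset.card_sdiff_of_subset hsub, htc, hcard2]
    obtain ⟨w, hw⟩ := Finset.card_eq_one.mp hsd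
    have hwmem : w ∈ t \ ({u, v} : Finset (Fin n)) := by
      rw [hw]; exact Finset.mem_singleton_self w
    obtain ⟨hwt, hwe⟩ := Finset.mem_sdiff.mp hwmem
    have hwu : w ≠ u := fun h => hwe (by simp [h])
    have hwv : w ≠ v := fun h => hwe (by simp [h])
    have hut : u ∈ t := hsub (Finset.mem_insert_self u _)
    have hvt : v ∈ t := hsub (Finset.mem_insert_of_mem (Finset.mem_singleton_self v))
    refine ⟨w, ?_, ?_⟩
    · simp only [nbrs, Finset.mem_inter, Finset.mem_filter, Finset.mem_univ, true_and]
      refine ⟨⟨hwu, Δ.down_closed t htS _ ?_⟩, hwv, Δ.down_closed t htS _ ?_⟩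
      · intro a ha
        rcases Finset.mem_insert.mp ha with rfl | h
        · exact hut
        · rw [Finset.mem_singleton.mp h]; exact hwt
      · intro a ha
        rcases Finset.mem_insert.mp ha with rfl | h
        · exact hvt
        · rw [Finset.mem_singleton.mp h]; exact hwt
    · show insert w ({u, v} : Finset (Fin n)) = t
      rw [Finset.insert_eq, ← hw, Finset.sdiff_union_of_subset hsub]

lemma sum_tri (Δ : AbsComplex n) :
    ∑ e ∈ Δ.faces.filter (fun e => e.card = 2),
        (Δ.faces.filter fun t => t.card = 3 ∧ e ⊆ t).card = 3 * Δ.cnt 3 := by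
  have h1 : ∀ e ∈ Δ.faces.filter (fun e => e.card = 2),
      (Δ.faces.filter fun t => t.card = 3 ∧ e ⊆ t).card
        = ((Δ.faces.filter (fun H => e ⊆ H)).filter (fun H => H.card = 3)).card := by
    intro e _
    rw [Finset.filter_filter]
    congr 1
    exact Finset.filter_congr fun t _ => and_comm
  rw [Finset.sum_congr rfl h1, Δ.count_pairs 2 3]
  rw [show Nat.choose 3 2 = 3 by decide, mul_comm]

lemma edge_deg_le (Δ : AbsComplex n) (hflag : Δ.Flag) {e : Finset (Fin n)}
    (he : e ∈ Δ.faces.filter (fun e => e.card = 2)) :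
    ∑ v ∈ e, (Δ.nbrs v).card
      ≤ n + (Δ.faces.filter fun t => t.card = 3 ∧ e ⊆ t).card := by
  obtain ⟨heS, hec⟩ := Finset.mem_filter.mp he
  obtain ⟨u, v, huv, rfl⟩ := Finset.card_eq_two.mp hec
  rw [Finset.sum_pair huv]
  have h1 := Finset.card_union_add_card_inter (Δ.nbrs u) (Δ.nbrs v)
  have h2 : (Δ.nbrs u ∪ Δ.nbrs v).card ≤ n := by
    refine le_trans (Finset.card_le_univ _) ?_
    simp
  have h3 := Δ.inter_card hflag huv heS
  omega

end AbsComplex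

/-- A flag Eulerian complex `Δ` of dimension `4` with `n` vertices satisfies
`4·f_1(Δ) < n² + 12n` (i.e. `f_1 < n²/4 + 3n`). -/
theorem statement9 {n : ℕ} (Δ : AbsComplex n) (hEul : Δ.IsEulerianDim 4) (hflag : Δ.Flag) :
    4 * Δ.fNum 1 < n ^ 2 + 12 * n := by
  obtain ⟨hdim, ⟨F5, hF5, hc5⟩, hE⟩ := hEul
  have hdim' : ∀ F ∈ Δ.faces, F.card ≤ 5 := hdim
  have hn5 : 5 ≤ n := by
    calc 5 = F5.card := hc5.symm
      _ ≤ (Finset.univ : Finset (Fin n)).card := Finset.card_le_univ F5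
      _ = n := by simp
  have hempty : (∅ : Finset (Fin n)) ∈ Δ.faces := Δ.down_closed F5 hF5 ∅ (Finset.empty_subset _)
  have hc2pos : 1 ≤ Δ.cnt 2 := by
    obtain ⟨e, hsub, hecard⟩ := Finset.exists_subset_card_eq (s := F5) (n := 2) (by omega)
    exact Finset.card_pos.mpr
      ⟨e, Finset.mem_filter.mpr ⟨Δ.down_closed F5 hF5 e hsub, hecard⟩⟩
  have E0 := Δ.euler_level hdim' hE 0
  have E2 := Δ.euler_level hdim' hE 2
  have E3 := Δ.euler_level hdim' hE 3
  rw [Finset.sum_range_succ, Finset.sum_range_succ, Finset.sum_range_succ,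
    Finset.sum_range_succ, Finset.sum_range_succ, Finset.sum_range_succ,
    Finset.sum_range_zero] at E0 E2 E3
  rw [Δ.cnt_zero hempty, Δ.cnt_one] at E0 E2 E3
  norm_num [Nat.choose] at E0 E2 E3
  -- abbreviations
  set a : ℤ := (Δ.cnt 2 : ℤ) with ha
  set b : ℤ := (Δ.cnt 3 : ℤ) with hb
  have h3b : 3 * b = 12 * a - 30 * (n : ℤ) + 60 := by linarith [E0, E2, E3]
  -- degree sums
  have hsum : ∑ v : Fin n, (Δ.nbrs v).card = 2 * Δ.cnt 2 := Δ.sum_deg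
  have hsq : ∑ v : Fin n, (Δ.nbrs v).card * (Δ.nbrs v).card
      ≤ n * Δ.cnt 2 + 3 * Δ.cnt 3 := by
    rw [← Δ.sum_edge_deg]
    calc ∑ e ∈ Δ.faces.filter (fun e => e.card = 2), ∑ v ∈ e, (Δ.nbrs v).card
        ≤ ∑ e ∈ Δ.faces.filter (fun e => e.card = 2),
            (n + (Δ.faces.filter fun t => t.card = 3 ∧ e ⊆ t).card) :=
          Finset.sum_le_sum (fun e he => Δ.edge_deg_le hflag he)
      _ = n * Δ.cnt 2 + 3 * Δ.cnt 3 := by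
          rw [Finset.sum_add_distrib, Finset.sum_const, smul_eq_mul, Δ.sum_tri, mul_comm]
          rfl
  have hCS := Finset.sum_mul_sq_le_sq_mul_sq Finset.univ (fun _ : Fin n => (1:ℤ))
    (fun v => ((Δ.nbrs v).card : ℤ))
  simp only [one_mul, one_pow, Finset.sum_const, Finset.card_univ, Fintype.card_fin,
    nsmul_eq_mul, smul_eq_mul, mul_one] at hCS
  -- cast to ℤ
  have hsumZ : ∑ v : Fin n, ((Δ.nbrs v).card : ℤ) = 2 * a := by
    rw [ha, ← Nat.cast_sum]
    exact_mod_cast congrArg (fun x : ℕ => (x : ℤ)) hsum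
  have hsqZ : ∑ v : Fin n, ((Δ.nbrs v).card : ℤ) ^ 2 ≤ (n : ℤ) * a + 3 * b := by
    have : ∑ v : Fin n, ((Δ.nbrs v).card : ℤ) ^ 2
        = ((∑ v : Fin n, (Δ.nbrs v).card * (Δ.nbrs v).card : ℕ) : ℤ) := by
      push_cast; congr 1; ext v; ring
    rw [this, ha, hb]
    exact_mod_cast hsq
  have hfNum : Δ.fNum 1 = Δ.cnt 2 := rfl
  have hgoal : 4 * a < (n : ℤ) ^ 2 + 12 * (n : ℤ) := by
    by_contra hcon
    push_neg at hcon
    have hS2 : (∑ v : Fin n, ((Δ.nbrs v).card : ℤ)) ^ 2 = 4 * a * a := by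
      rw [hsumZ]; ring
    have ha0 : (0 : ℤ) ≤ a := by positivity
    have h1 : ((n : ℤ) ^ 2 + 12 * n) * a ≤ 4 * a * a :=
      mul_le_mul_of_nonneg_right hcon ha0
    have h2 : (n : ℤ) * (∑ v : Fin n, ((Δ.nbrs v).card : ℤ) ^ 2)
        ≤ (n : ℤ) * ((n : ℤ) * a + 3 * b) :=
      mul_le_mul_of_nonneg_left hsqZ (by positivity)
    have hnZ : (5 : ℤ) ≤ (n : ℤ) := by exact_mod_cast hn5
    nlinarith [hCS, hS2, h1, h2, h3b, hnZ]
  rw [hfNum]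
  zify
  linarith [hgoal]
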